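/- arXiv:2603.19569 — 3 statements merged into one kernel-verified Lean document; each statement's English description precedes it below -/
import Mathlib

section
/- (Proposition 1.) Let θ ∈ ℝ^{1+q} have distinguished coordinate 0 and remaining coordinates partitioned into disjoint nonempty blocks B_M indexed by M in a finite set 𝓜, and write θ^M for the restriction of θ to block B_M. Let λ ≥ 0, α₁ ≥ 0, α₂ ≥ 0. Assume θ^M ≠ 0 for every M ∈ 𝓜. Let u ∈ ℝ^{1+q} satisfy ‖u‖₂ ≤ 1, and if θ ≠ 0 additionally u = θ/‖θ‖₂. Let u^𝓜 ∈ ℝ^{1+q} have coordinate 0 equal to 0 and, for each i ∈ B_M, (u^𝓜)_i = θ_i/‖θ^M‖₂. Let v ∈ ℝ^{1+q} have coordinate 0 equal to 0 and, for each i ∈ B_M, v_i = sign(θ_i) if θ_i ≠ 0 and v_i ∈ [−1, 1] otherwise. Set g = λu + λα₁u^𝓜 + λα₂v, and define weights w ∈ ℝ^{1+q} by w₀ = 0 and w_i = λα₁|θ_i|/‖θ^{M(i)}‖₂ + λα₂ for i ∈ B_{M(i)}. Then ‖S(g, w)‖₂ ≤ λ‖u‖₂, where S(g, w) is the componentwise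 soft-threshold with S(g, w)_i = sign(g_i)·(|g_i| − w_i)₊. -/
open scoped BigOperators

/-- Euclidean (ℓ2) norm of a finitely-indexed real vector. -/
noncomputable def euclNorm {α : Type*} [Fintype α] (f : α → ℝ) : ℝ :=
  Real.sqrt (∑ a, f a ^ 2)


lemma abs_sign_le_one (x : ℝ) : |Real.sign x| ≤ 1 := by
  rcases lt_trichotomy x 0 with h | h | h
  · rw [Real.sign_of_neg h]; norm_num
  · rw [h, Real.sign_zero]; norm_num
  · rw [Real.sign_of_pos h]; norm_num

lemma euclNorm_mono {α : Type*} [Fintype α] {f h : α → ℝ} (H : ∀ a, |f a| ≤ |h a|) :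
    euclNorm f ≤ euclNorm h := by
  unfold euclNorm
  apply Real.sqrt_le_sqrt
  apply Finset.sum_le_sum
  intro a _
  have := H a
  nlinarith [abs_nonneg (f a), sq_abs (f a), sq_abs (h a)]

lemma euclNorm_smul {α : Type*} [Fintype α] (c : ℝ) (hc : 0 ≤ c) (f : α → ℝ) :
    euclNorm (fun a => c * f a) = c * euclNorm f := by
  unfold euclNorm
  rw [← Real.sqrt_sq hc, ← Real.sqrt_mul (sq_nonneg c), Finset.mul_sum]
  congr 1
  apply Finset.sum_congr rfl
  intro a _
  simp only [mul_pow, Real.sq_sqrt (sq_nonneg c)]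

/-- **Proposition 1.**  The coordinates of `θ ∈ ℝ^{1+q}` consist of a distinguished
coordinate (`none`) and disjoint nonempty blocks `B M` indexed by `M ∈ 𝓜`
(the coordinate `some ⟨M, b⟩` lies in block `M`).  Assume each block restriction
`θ^M` is nonzero; `u` is a subgradient of `‖·‖₂` at `θ` (so `‖u‖₂ ≤ 1`, with
`u = θ/‖θ‖₂` if `θ ≠ 0`); `u𝓜` vanishes at the distinguished coordinate and
equals `θ_i/‖θ^M‖₂` on block `M`; `v` vanishes at the distinguished coordinate,
equals `sign(θ_i)` when `θ_i ≠ 0` and lies in `[−1,1]` otherwise.  With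
`g = λu + λα₁u𝓜 + λα₂v` and weights `w` given by `w₀ = 0` and
`w_i = λα₁|θ_i|/‖θ^{M(i)}‖₂ + λα₂`, the componentwise soft-threshold
`S(g,w)_i = sign(g_i)·(|g_i| − w_i)₊` satisfies `‖S(g,w)‖₂ ≤ λ‖u‖₂`. -/
theorem prop1 {𝓜 : Type*} [Fintype 𝓜] (B : 𝓜 → Type*)
    [∀ M, Fintype (B M)] [∀ M, Nonempty (B M)]
    (θ u u𝓜 v g w : Option ((M : 𝓜) × B M) → ℝ)
    (lam α₁ α₂ : ℝ) (hlam : 0 ≤ lam) (hα₁ : 0 ≤ α₁) (hα₂ : 0 ≤ α₂)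
    (hθM : ∀ M : 𝓜, (fun b : B M => θ (some ⟨M, b⟩)) ≠ 0)
    (hu : euclNorm u ≤ 1)
    (hu' : θ ≠ 0 → u = fun i => θ i / euclNorm θ)
    (hu𝓜0 : u𝓜 none = 0)
    (hu𝓜 : ∀ (M : 𝓜) (b : B M),
      u𝓜 (some ⟨M, b⟩) = θ (some ⟨M, b⟩) / euclNorm (fun b' : B M => θ (some ⟨M, b'⟩)))
    (hv0 : v none = 0)
    (hv : ∀ (M : 𝓜) (b : B M),
      (θ (some ⟨M, b⟩) ≠ 0 → v (some ⟨M, b⟩) = Real.sign (θ (some ⟨M, b⟩))) ∧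
      (θ (some ⟨M, b⟩) = 0 → v (some ⟨M, b⟩) ∈ Set.Icc (-1 : ℝ) 1))
    (hg : g = fun i => lam * u i + lam * α₁ * u𝓜 i + lam * α₂ * v i)
    (hw0 : w none = 0)
    (hw : ∀ (M : 𝓜) (b : B M),
      w (some ⟨M, b⟩) =
        lam * α₁ * |θ (some ⟨M, b⟩)| / euclNorm (fun b' : B M => θ (some ⟨M, b'⟩)) + lam * α₂) :
    euclNorm (fun i => Real.sign (g i) * max (|g i| - w i) 0) ≤ lam * euclNorm u :=  by
  have key : ∀ i, |Real.sign (g i) * max (|g i| - w i) 0| ≤ |lam * u i| := by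
    intro i
    have hmax : (0:ℝ) ≤ max (|g i| - w i) 0 := le_max_right _ _
    have h1 : |Real.sign (g i) * max (|g i| - w i) 0| ≤ max (|g i| - w i) 0 := by
      rw [abs_mul, abs_of_nonneg hmax]
      calc |Real.sign (g i)| * max (|g i| - w i) 0
          ≤ 1 * max (|g i| - w i) 0 := by
            apply mul_le_mul_of_nonneg_right (abs_sign_le_one _) hmax
        _ = max (|g i| - w i) 0 := one_mul _
    refine h1.trans ?_
    have hgi : g i = lam * u i + lam * α₁ * u𝓜 i + lam * α₂ * v i := by rw [hg]
    rcases i with _ | ⟨M, b⟩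
    · rw [hw0, hgi, hu𝓜0, hv0]
      simp only [mul_zero, add_zero, sub_zero]
      exact max_le (le_refl _) (abs_nonneg _)
    · -- block coordinate
      set e := euclNorm (fun b' : B M => θ (some ⟨M, b'⟩)) with he
      have he0 : 0 ≤ e := Real.sqrt_nonneg _
      have hv1 : |v (some ⟨M, b⟩)| ≤ 1 := by
        rcases eq_or_ne (θ (some ⟨M, b⟩)) 0 with h | h
        · have := (hv M b).2 h
          rw [abs_le]; exact ⟨this.1, this.2⟩
        · rw [(hv M b).1 h]; exact abs_sign_le_one _
      have hum : |u𝓜 (some ⟨M, b⟩)| = |θ (some ⟨M, b⟩)| / e := by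
        rw [hu𝓜 M b, abs_div, abs_of_nonneg he0]
      have hwi : w (some ⟨M, b⟩) = lam * α₁ * |u𝓜 (some ⟨M, b⟩)| + lam * α₂ := by
        rw [hw M b, hum, mul_div_assoc]
      have hb : |g (some ⟨M, b⟩)| - w (some ⟨M, b⟩) ≤ |lam * u (some ⟨M, b⟩)| := by
        rw [hgi, hwi]
        have t1 : |lam * u (some ⟨M, b⟩) + lam * α₁ * u𝓜 (some ⟨M, b⟩)
            + lam * α₂ * v (some ⟨M, b⟩)|
            ≤ |lam * u (some ⟨M, b⟩)| + |lam * α₁ * u𝓜 (some ⟨M, b⟩)|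
            + |lam * α₂ * v (some ⟨M, b⟩)| :=
          (abs_add_le _ _).trans (by
            have := abs_add_le (lam * u (some ⟨M, b⟩)) (lam * α₁ * u𝓜 (some ⟨M, b⟩))
            linarith)
        have t2 : |lam * α₁ * u𝓜 (some ⟨M, b⟩)| = lam * α₁ * |u𝓜 (some ⟨M, b⟩)| := by
          rw [abs_mul, abs_of_nonneg (mul_nonneg hlam hα₁)]
        have t3 : |lam * α₂ * v (some ⟨M, b⟩)| ≤ lam * α₂ := by
          rw [abs_mul, abs_of_nonneg (mul_nonneg hlam hα₂)]
          calc lam * α₂ * |v (some ⟨M, b⟩)| ≤ lam * α₂ * 1 :=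
                mul_le_mul_of_nonneg_left hv1 (mul_nonneg hlam hα₂)
            _ = lam * α₂ := mul_one _
        linarith
      exact max_le hb (abs_nonneg _)
  calc euclNorm (fun i => Real.sign (g i) * max (|g i| - w i) 0)
      ≤ euclNorm (fun i => lam * u i) := euclNorm_mono key
    _ = lam * euclNorm u := euclNorm_smul lam hlam u
end

section
/- Under the hypotheses of Proposition 1 (θ ∈ ℝ^{1+q} with blocks B_M, θ^M ≠ 0 for all M, subgradient vectors u, u^𝓜, v with ‖u‖₂ ≤ 1, g = λu + λα₁u^𝓜 + λα₂v, and weights w with w₀ = 0 and w_i = λα₁|θ_i|/‖θ^{M(i)}‖₂ + λα₂), the soft-thresholded gradient satisfies ‖S(g, w)‖₂ ≤ λ. -/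
open scoped BigOperators

/-- Euclidean (ℓ2) norm of a finitely-indexed real vector. -/
noncomputable def l2norm {α : Type*} [Fintype α] (f : α → ℝ) : ℝ :=
  Real.sqrt (∑ a, f a ^ 2)

/-- **Strong-rule bound (Proposition 1, consequence).**  The coordinates of `θ ∈ ℝ^{1+q}` consist of a distinguished
coordinate (`none`) and disjoint nonempty blocks `B M` indexed by `M ∈ 𝓜`
(the coordinate `some ⟨M, b⟩` lies in block `M`).  Assume each block restriction
`θ^M` is nonzero; `u` is a subgradient of `‖·‖₂` at `θ` (so `‖u‖₂ ≤ 1`, with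
`u = θ/‖θ‖₂` if `θ ≠ 0`); `u𝓜` vanishes at the distinguished coordinate and
equals `θ_i/‖θ^M‖₂` on block `M`; `v` vanishes at the distinguished coordinate,
equals `sign(θ_i)` when `θ_i ≠ 0` and lies in `[−1,1]` otherwise.  With
`g = λu + λα₁u𝓜 + λα₂v` and weights `w` given by `w₀ = 0` and
`w_i = λα₁|θ_i|/‖θ^{M(i)}‖₂ + λα₂`, the componentwise soft-threshold
`S(g,w)_i = sign(g_i)·(|g_i| − w_i)₊` satisfies `‖S(g,w)‖₂ ≤ λ`. -/
theorem strong_rule_bound {𝓜 : Type*} [Fintype 𝓜] (B : 𝓜 → Type*)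
    [∀ M, Fintype (B M)] [∀ M, Nonempty (B M)]
    (θ u u𝓜 v g w : Option ((M : 𝓜) × B M) → ℝ)
    (lam α₁ α₂ : ℝ) (hlam : 0 ≤ lam) (hα₁ : 0 ≤ α₁) (hα₂ : 0 ≤ α₂)
    (hθM : ∀ M : 𝓜, (fun b : B M => θ (some ⟨M, b⟩)) ≠ 0)
    (hu : l2norm u ≤ 1)
    (hu' : θ ≠ 0 → u = fun i => θ i / l2norm θ)
    (hu𝓜0 : u𝓜 none = 0)
    (hu𝓜 : ∀ (M : 𝓜) (b : B M),
      u𝓜 (some ⟨M, b⟩) = θ (some ⟨M, b⟩) / l2norm (fun b' : B M => θ (some ⟨M, b'⟩)))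
    (hv0 : v none = 0)
    (hv : ∀ (M : 𝓜) (b : B M),
      (θ (some ⟨M, b⟩) ≠ 0 → v (some ⟨M, b⟩) = Real.sign (θ (some ⟨M, b⟩))) ∧
      (θ (some ⟨M, b⟩) = 0 → v (some ⟨M, b⟩) ∈ Set.Icc (-1 : ℝ) 1))
    (hg : g = fun i => lam * u i + lam * α₁ * u𝓜 i + lam * α₂ * v i)
    (hw0 : w none = 0)
    (hw : ∀ (M : 𝓜) (b : B M),
      w (some ⟨M, b⟩) =
        lam * α₁ * |θ (some ⟨M, b⟩)| / l2norm (fun b' : B M => θ (some ⟨M, b'⟩)) + lam * α₂) :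
    l2norm (fun i => Real.sign (g i) * max (|g i| - w i) 0) ≤ lam := by

  have hsign : ∀ x : ℝ, |Real.sign x| ≤ 1 := by
    intro x
    rcases Real.sign_apply_eq x with h | h | h <;> rw [h] <;> norm_num
  have key : ∀ i, |Real.sign (g i) * max (|g i| - w i) 0| ≤ lam * |u i| := by
    intro i
    have hmax : max (|g i| - w i) 0 ≤ lam * |u i| := by
      cases i with
      | none =>
        have hgn : g none = lam * u none := by rw [hg]; simp [hu𝓜0, hv0]
        have : |g none| - w none = lam * |u none| := by
          rw [hgn, hw0, abs_mul, abs_of_nonneg hlam]; ring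
        rw [this]
        exact max_le le_rfl (by positivity)
      | some p =>
        obtain ⟨M, b⟩ := p
        have hvb : |v (some ⟨M, b⟩)| ≤ 1 := by
          by_cases hθ : θ (some ⟨M, b⟩) = 0
          · obtain ⟨h1, h2⟩ := (hv M b).2 hθ
            exact abs_le.2 ⟨h1, h2⟩
          · rw [(hv M b).1 hθ]; exact hsign _
        have henn : (0:ℝ) ≤ l2norm (fun b' : B M => θ (some ⟨M, b'⟩)) :=
          Real.sqrt_nonneg _
        have hueq : |u𝓜 (some ⟨M, b⟩)|
            = |θ (some ⟨M, b⟩)| / l2norm (fun b' : B M => θ (some ⟨M, b'⟩)) := by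
          rw [hu𝓜 M b, abs_div, abs_of_nonneg henn]
        have hgb : |g (some ⟨M, b⟩)| ≤ lam * |u (some ⟨M, b⟩)| + w (some ⟨M, b⟩) := by
          rw [hg, hw M b]
          calc |lam * u (some ⟨M, b⟩) + lam * α₁ * u𝓜 (some ⟨M, b⟩)
                + lam * α₂ * v (some ⟨M, b⟩)|
              ≤ |lam * u (some ⟨M, b⟩)| + |lam * α₁ * u𝓜 (some ⟨M, b⟩)|
                + |lam * α₂ * v (some ⟨M, b⟩)| := by
                exact (abs_add_le _ _).trans (add_le_add_left (abs_add_le _ _) _)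
            _ ≤ lam * |u (some ⟨M, b⟩)|
                + lam * α₁ * |θ (some ⟨M, b⟩)| / l2norm (fun b' : B M => θ (some ⟨M, b'⟩))
                + lam * α₂ := by
                gcongr ?_ + ?_ + ?_
                · rw [abs_mul, abs_of_nonneg hlam]
                · rw [abs_mul, abs_of_nonneg (by positivity : (0:ℝ) ≤ lam * α₁), hueq,
                    mul_div_assoc]
                · calc |lam * α₂ * v (some ⟨M, b⟩)| = lam * α₂ * |v (some ⟨M, b⟩)| := by
                        rw [abs_mul, abs_of_nonneg (by positivity : (0:ℝ) ≤ lam * α₂)]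
                    _ ≤ lam * α₂ * 1 := by
                        exact mul_le_mul_of_nonneg_left hvb (by positivity)
                    _ = lam * α₂ := mul_one _
            _ = lam * |u (some ⟨M, b⟩)|
                + (lam * α₁ * |θ (some ⟨M, b⟩)| / l2norm (fun b' : B M => θ (some ⟨M, b'⟩))
                + lam * α₂) := by ring
        exact max_le (by linarith) (by positivity)
    calc |Real.sign (g i) * max (|g i| - w i) 0|
        = |Real.sign (g i)| * |max (|g i| - w i) 0| := abs_mul _ _
      _ ≤ 1 * |max (|g i| - w i) 0| := by
          exact mul_le_mul_of_nonneg_right (hsign _) (abs_nonneg _)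
      _ = max (|g i| - w i) 0 := by rw [one_mul, abs_of_nonneg (le_max_right _ _)]
      _ ≤ lam * |u i| := hmax
  unfold l2norm
  calc Real.sqrt (∑ a, (Real.sign (g a) * max (|g a| - w a) 0) ^ 2)
      ≤ Real.sqrt (∑ a, (lam * |u a|) ^ 2) := by
        apply Real.sqrt_le_sqrt
        apply Finset.sum_le_sum
        intro a _
        rw [← sq_abs (Real.sign (g a) * _), ← sq_abs (lam * |u a|)]
        exact pow_le_pow_left₀ (abs_nonneg _) ((key a).trans (le_abs_self _)) 2
    _ = lam * Real.sqrt (∑ a, u a ^ 2) := by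
        have h : ∀ a, (lam * |u a|) ^ 2 = lam ^ 2 * u a ^ 2 := fun a => by
          rw [mul_pow, sq_abs]
        simp_rw [h]
        rw [← Finset.mul_sum, Real.sqrt_mul (sq_nonneg lam), Real.sqrt_sq hlam]
    _ ≤ lam * 1 := mul_le_mul_of_nonneg_left hu hlam
    _ = lam := mul_one _
end

section
/- (Sequential strong rule.) Let c : ℝ → ℝ^n satisfy the Lipschitz condition ‖c(λ) − c(λ′)‖₂ ≤ |λ − λ′| for all λ, λ′ ∈ ℝ. If 0 < λ_m < λ_{m−1} and ‖c(λ_{m−1})‖₂ ≤ 2λ_m − λ_{m−1}, then ‖c(λ_m)‖₂ ≤ λ_m. -/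
/-- **Sequential strong rule.**  If `c : ℝ → ℝ^n` is Lipschitz with constant 1
(`‖c(λ) − c(λ′)‖₂ ≤ |λ − λ′|`), `0 < λ_m < λ_{m−1}`, and
`‖c(λ_{m−1})‖₂ ≤ 2λ_m − λ_{m−1}`, then `‖c(λ_m)‖₂ ≤ λ_m`. -/
theorem sequential_strong_rule {n : ℕ} (c : ℝ → EuclideanSpace ℝ (Fin n))
    (hLip : ∀ lam lam' : ℝ, ‖c lam - c lam'‖ ≤ |lam - lam'|)
    (lamPrev lamCur : ℝ) (h0 : 0 < lamCur) (hlt : lamCur < lamPrev)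
    (hscreen : ‖c lamPrev‖ ≤ 2 * lamCur - lamPrev) :
    ‖c lamCur‖ ≤ lamCur := by
  have h := hLip lamCur lamPrev
  have : ‖c lamCur‖ ≤ ‖c lamCur - c lamPrev‖ + ‖c lamPrev‖ := by
    simpa using norm_add_le (c lamCur - c lamPrev) (c lamPrev)
  have habs : |lamCur - lamPrev| = lamPrev - lamCur := by
    rw [abs_of_nonpos (by linarith)]; ring
  linarith [habs ▸ h]
end
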